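/- The equilateral triangle Δ_β of height β = cos(π/12) is a convex G₄-covering of all closed curves of length 2: for every continuous γ : [0,1] → ℂ with γ(0) = γ(1) and arc length (total variation on [0,1]) equal to 2 there exist j ∈ {0,1,2,3} and v ∈ ℂ such that {i^j·γ(t) + v : t ∈ [0,1]} ⊆ Δ_β. -/

import Mathlib

open Set MeasureTheory

/-- A closed curve of length 2: continuous on `[0,1]`, closed, with total variation 2. -/
def IsClosedCurve2 (γ : ℝ → ℂ) : Prop :=
  ContinuousOn γ (Set.Icc 0 1) ∧ γ 0 = γ 1 ∧ eVariationOn γ (Set.Icc 0 1) = 2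

/-- β = cos(π/12), the height of the triangle Δ_β. -/
noncomputable def β : ℝ := Real.cos (Real.pi / 12)

/-- The equilateral triangle of height β with vertices −β/√3, β/√3, βi. -/
noncomputable def Δβ : Set ℂ :=
  convexHull ℝ {((-(β / Real.sqrt 3) : ℝ) : ℂ), ((β / Real.sqrt 3 : ℝ) : ℂ),
    (β : ℂ) * Complex.I}


noncomputable def ww : ℂ := (Real.sqrt 3 / 2 : ℝ) + (1/2 : ℝ) * Complex.I

lemma s3sq : (Real.sqrt 3 : ℝ)^2 = 3 := Real.sq_sqrt (by norm_num)

lemma ww2 : ww^2 = ((1/2 : ℝ) : ℂ) + ((Real.sqrt 3 / 2 : ℝ) : ℂ) * Complex.I := by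
  unfold ww
  have h : ((Real.sqrt 3 : ℝ) : ℂ)^2 = 3 := by
    rw [← Complex.ofReal_pow, s3sq]; norm_num
  push_cast
  linear_combination (1/4 : ℂ) * h + (1/4 : ℂ) * Complex.I_sq

lemma ww3 : ww^3 = Complex.I := by
  have h : ((Real.sqrt 3 : ℝ) : ℂ)^2 = 3 := by
    rw [← Complex.ofReal_pow, s3sq]; norm_num
  have e : ww^3 = ww^2 * ww := by ring
  rw [e, ww2]; unfold ww
  push_cast
  linear_combination (Complex.I/4) * h + (((Real.sqrt 3 : ℝ) : ℂ)/4) * Complex.I_sq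

lemma ww6 : ww^6 = -1 := by
  have e : ww^6 = (ww^3)^2 := by ring
  rw [e, ww3, Complex.I_sq]

lemma ww12 : ww^12 = 1 := by
  have e : ww^12 = (ww^6)^2 := by ring
  rw [e, ww6]; ring

lemma ww4 : ww^4 = ((-(1/2) : ℝ) : ℂ) + ((Real.sqrt 3 / 2 : ℝ) : ℂ) * Complex.I := by
  have e : ww^4 = ww^3 * ww := by ring
  rw [e, ww3]; unfold ww; push_cast
  linear_combination (1/2 : ℂ) * Complex.I_sq

lemma ww5 : ww^5 = ((-(Real.sqrt 3 / 2) : ℝ) : ℂ) + ((1/2 : ℝ) : ℂ) * Complex.I := by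
  have e : ww^5 = ww^2 * ww^3 := by ring
  rw [e, ww2, ww3]; push_cast
  linear_combination (((Real.sqrt 3:ℝ):ℂ)/2) * Complex.I_sq

lemma ww9 : ww^9 = -Complex.I := by
  have e : ww^9 = ww^6 * ww^3 := by ring
  rw [e, ww6, ww3]; ring

lemma ww_mul_conj : ww * (starRingEnd ℂ) ww = 1 := by
  rw [Complex.mul_conj]
  have h1 : Complex.normSq ww = 1 := by
    rw [Complex.normSq_apply]
    simp only [ww, Complex.add_re, Complex.ofReal_re, Complex.mul_re, Complex.ofReal_im,
      Complex.I_re, Complex.I_im, Complex.add_im, Complex.mul_im]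
    have h2 : (Real.sqrt 3 / 2)^2 = 3/4 := by rw [div_pow, s3sq]; norm_num
    nlinarith [h2]
  rw [h1]; norm_num

lemma ww_pow_conj (b c : ℕ) : ww^b * (starRingEnd ℂ) (ww^(b+c)) = (starRingEnd ℂ) (ww^c) := by
  rw [pow_add, map_mul, ← mul_assoc, map_pow, ← mul_pow, ww_mul_conj, one_pow, one_mul]


lemma conj_mk (a b : ℝ) :
    (starRingEnd ℂ) ((a:ℂ) + (b:ℂ)*Complex.I) = (a:ℂ) - (b:ℂ)*Complex.I := by
  simp [map_add, map_mul, Complex.conj_ofReal, Complex.conj_I]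
  ring

lemma re_mk (z : ℂ) (a b : ℝ) :
    (z * ((a:ℂ) - (b:ℂ)*Complex.I)).re = a * z.re + b * z.im := by
  simp [Complex.mul_re, Complex.sub_re, Complex.sub_im, Complex.mul_im]
  ring

lemma re0 (z : ℂ) : (z * (starRingEnd ℂ) (ww^0)).re = z.re := by simp
lemma re1 (z : ℂ) : (z * (starRingEnd ℂ) (ww^1)).re
    = (Real.sqrt 3 / 2) * z.re + (1/2) * z.im := by
  rw [pow_one]; unfold ww; rw [conj_mk, re_mk]
lemma re2 (z : ℂ) : (z * (starRingEnd ℂ) (ww^2)).re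
    = (1/2) * z.re + (Real.sqrt 3 / 2) * z.im := by
  rw [ww2, conj_mk, re_mk]
lemma re3 (z : ℂ) : (z * (starRingEnd ℂ) (ww^3)).re = z.im := by
  rw [ww3]; simp [Complex.mul_re]
lemma re4 (z : ℂ) : (z * (starRingEnd ℂ) (ww^4)).re
    = (-(1/2)) * z.re + (Real.sqrt 3 / 2) * z.im := by
  rw [ww4, conj_mk, re_mk]
lemma re5 (z : ℂ) : (z * (starRingEnd ℂ) (ww^5)).re
    = (-(Real.sqrt 3/2)) * z.re + (1/2) * z.im := by
  rw [ww5, conj_mk, re_mk]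
lemma re9 (z : ℂ) : (z * (starRingEnd ℂ) (ww^9)).re = -z.im := by
  rw [ww9]; simp [Complex.mul_re]

lemma re_shift6 (m : ℕ) (z : ℂ) :
    (z * (starRingEnd ℂ) (ww^(m+6))).re = -(z * (starRingEnd ℂ) (ww^m)).re := by
  rw [pow_add, ww6, map_mul]
  simp

lemma cos12_eq : Real.cos (Real.pi / 12) = (Real.sqrt 6 + Real.sqrt 2) / 4 := by
  have h : Real.pi / 12 = Real.pi / 3 - Real.pi / 4 := by ring
  rw [h, Real.cos_sub, Real.cos_pi_div_three, Real.cos_pi_div_four, Real.sin_pi_div_three,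
    Real.sin_pi_div_four]
  have h6 : Real.sqrt 6 = Real.sqrt 3 * Real.sqrt 2 := by
    rw [← Real.sqrt_mul (by norm_num : (0:ℝ) ≤ 3)]; norm_num
  rw [h6]; ring

lemma cos12_pos : 0 < Real.cos (Real.pi / 12) := by
  rw [cos12_eq]
  have := Real.sqrt_nonneg 6
  have : 0 < Real.sqrt 2 := Real.sqrt_pos.mpr (by norm_num)
  linarith [Real.sqrt_nonneg 6]

lemma cos12_sq : 16 * (Real.cos (Real.pi / 12))^2 = 8 + 4 * Real.sqrt 3 := by
  rw [cos12_eq]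
  have h6 : (Real.sqrt 6)^2 = 6 := Real.sq_sqrt (by norm_num)
  have h2 : (Real.sqrt 2)^2 = 2 := Real.sq_sqrt (by norm_num)
  have h62 : Real.sqrt 6 * Real.sqrt 2 = 2 * Real.sqrt 3 := by
    rw [show (6:ℝ) = 3 * 2 by norm_num, Real.sqrt_mul (by norm_num : (0:ℝ) ≤ 3)]
    have h4 : Real.sqrt 2 * Real.sqrt 2 = 2 := Real.mul_self_sqrt (by norm_num)
    calc Real.sqrt 3 * Real.sqrt 2 * Real.sqrt 2 = Real.sqrt 3 * 2 := by rw [mul_assoc, h4]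
      _ = 2 * Real.sqrt 3 := by ring
  nlinarith [h6, h2, h62]

set_option maxHeartbeats 1000000 in
lemma core (s e0 e1 e2 e3 e4 e5 : ℝ) (hs : s^2 = 3) (hsn : 0 ≤ s)
    (h0 : e0 = 1 ∨ e0 = -1) (h1 : e1 = 1 ∨ e1 = -1) (h2 : e2 = 1 ∨ e2 = -1)
    (h3 : e3 = 1 ∨ e3 = -1) (h4 : e4 = 1 ∨ e4 = -1) (h5 : e5 = 1 ∨ e5 = -1) :
    (e0 + (e1*s + e2 - e4 - e5*s)/2)^2 + (e3 + (e1 + e2*s + e4*s + e5)/2)^2 ≤ 8 + 4*s := by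
  rcases h0 with rfl|rfl <;> rcases h1 with rfl|rfl <;> rcases h2 with rfl|rfl <;>
    rcases h3 with rfl|rfl <;> rcases h4 with rfl|rfl <;> rcases h5 with rfl|rfl <;>
    (ring_nf; linarith [hs, hsn])

lemma abs_sign (r : ℝ) : ∃ e : ℝ, (e = 1 ∨ e = -1) ∧ |r| = e * r := by
  rcases le_or_gt 0 r with h|h
  · exact ⟨1, Or.inl rfl, by rw [_root_.abs_of_nonneg h, one_mul]⟩
  · exact ⟨-1, Or.inr rfl, by rw [_root_.abs_of_neg h]; ring⟩

lemma dir_sum (z : ℂ) : ∑ m ∈ Finset.range 6, |(z * (starRingEnd ℂ) (ww^m)).re|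
    ≤ 4 * Real.cos (Real.pi / 12) * ‖z‖ := by
  obtain ⟨e0, he0, h0⟩ := abs_sign (z * (starRingEnd ℂ) (ww^0)).re
  obtain ⟨e1, he1, h1⟩ := abs_sign (z * (starRingEnd ℂ) (ww^1)).re
  obtain ⟨e2, he2, h2⟩ := abs_sign (z * (starRingEnd ℂ) (ww^2)).re
  obtain ⟨e3, he3, h3⟩ := abs_sign (z * (starRingEnd ℂ) (ww^3)).re
  obtain ⟨e4, he4, h4⟩ := abs_sign (z * (starRingEnd ℂ) (ww^4)).re
  obtain ⟨e5, he5, h5⟩ := abs_sign (z * (starRingEnd ℂ) (ww^5)).re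
  have hsum : ∑ m ∈ Finset.range 6, |(z * (starRingEnd ℂ) (ww^m)).re|
      = |(z * (starRingEnd ℂ) (ww^0)).re| + |(z * (starRingEnd ℂ) (ww^1)).re|
      + |(z * (starRingEnd ℂ) (ww^2)).re| + |(z * (starRingEnd ℂ) (ww^3)).re|
      + |(z * (starRingEnd ℂ) (ww^4)).re| + |(z * (starRingEnd ℂ) (ww^5)).re| := by
    simp [Finset.sum_range_succ]
  rw [hsum, h0, h1, h2, h3, h4, h5, re0, re1, re2, re3, re4, re5]
  set X := z.re with hX
  set Y := z.im with hY
  set s := Real.sqrt 3 with hs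
  set A := e0 + (e1*s + e2 - e4 - e5*s)/2 with hA
  set B := e3 + (e1 + e2*s + e4*s + e5)/2 with hB
  have hgoal : e0 * X + e1 * (s / 2 * X + 1 / 2 * Y) + e2 * (1 / 2 * X + s / 2 * Y)
      + e3 * Y + e4 * (-(1 / 2) * X + s / 2 * Y) + e5 * (-(s / 2) * X + 1 / 2 * Y)
      = A * X + B * Y := by rw [hA, hB]; ring
  rw [hgoal]
  have hAB : A^2 + B^2 ≤ 8 + 4*s := core s e0 e1 e2 e3 e4 e5 s3sq (Real.sqrt_nonneg 3)
    he0 he1 he2 he3 he4 he5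
  set r := ‖z‖ with hr
  have hrn : 0 ≤ r := norm_nonneg z
  have hr2 : r^2 = X^2 + Y^2 := by
    rw [hr, Complex.sq_norm, Complex.normSq_apply, hX, hY]; ring
  have h16 : 16 * (Real.cos (Real.pi / 12))^2 = 8 + 4*s := cos12_sq
  have hXY : (0:ℝ) ≤ X^2 + Y^2 := by positivity
  have h2' : (A^2 + B^2) * (X^2 + Y^2) ≤ (8 + 4*s) * (X^2 + Y^2) :=
    mul_le_mul_of_nonneg_right hAB hXY
  have expand : (A*X+B*Y)^2 + (A*Y-B*X)^2 = (A^2+B^2)*(X^2+Y^2) := by ring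
  have k1 : (A*X+B*Y)^2 ≤ (8+4*s)*(X^2+Y^2) := by
    linarith [sq_nonneg (A*Y-B*X), h2', expand]
  have k2 : (4 * Real.cos (Real.pi / 12) * r)^2 = (8+4*s)*(X^2+Y^2) := by
    calc (4 * Real.cos (Real.pi / 12) * r)^2 = 16 * (Real.cos (Real.pi / 12))^2 * r^2 := by ring
      _ = (8+4*s)*(X^2+Y^2) := by rw [h16, hr2]
  have key : (A*X + B*Y)^2 ≤ (4 * Real.cos (Real.pi / 12) * r)^2 := by rw [k2]; exact k1
  have hc : 0 ≤ 4 * Real.cos (Real.pi / 12) * r :=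
    mul_nonneg (mul_nonneg (by norm_num) cos12_pos.le) hrn
  calc A*X + B*Y ≤ |A*X + B*Y| := le_abs_self _
    _ ≤ 4 * Real.cos (Real.pi / 12) * r := by
        rw [← Real.sqrt_sq_eq_abs, ← Real.sqrt_sq hc]
        exact Real.sqrt_le_sqrt key

lemma tel_abs (g : ℕ → ℝ) {i j : ℕ} (hij : i ≤ j) :
    |g j - g i| ≤ ∑ k ∈ Finset.Ico i j, |g (k+1) - g k| := by
  have h1 : ∑ k ∈ Finset.Ico i j, (g (k+1) - g k) = g j - g i := by
    rw [Finset.sum_Ico_eq_sub _ hij, Finset.sum_range_sub, Finset.sum_range_sub]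
    ring
  calc |g j - g i| = |∑ k ∈ Finset.Ico i j, (g (k+1) - g k)| := by rw [h1]
    _ ≤ ∑ k ∈ Finset.Ico i j, |g (k+1) - g k| := Finset.abs_sum_le_sum_abs _ _

lemma two_osc_le (g : ℕ → ℝ) (N p q : ℕ) (hp : p ≤ N) (hq : q ≤ N) (hg : g 0 = g N) :
    2*(g p - g q) ≤ ∑ k ∈ Finset.range N, |g (k+1) - g k| := by
  rcases le_total q p with h|h
  · have e : ∑ k ∈ Finset.range N, |g (k+1) - g k|
        = (∑ k ∈ Finset.Ico 0 q, |g (k+1) - g k| + ∑ k ∈ Finset.Ico q p, |g (k+1) - g k|)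
          + ∑ k ∈ Finset.Ico p N, |g (k+1) - g k| := by
      rw [Finset.sum_Ico_consecutive _ (Nat.zero_le q) h,
        Finset.sum_Ico_consecutive _ (Nat.zero_le p) hp, Finset.range_eq_Ico]
    rw [e]
    have t1 := tel_abs g (Nat.zero_le q)
    have t2 := tel_abs g h
    have t3 := tel_abs g hp
    have a1 := neg_le_abs (g q - g 0)
    have a2 := le_abs_self (g p - g q)
    have a3 := neg_le_abs (g N - g p)
    linarith
  · have e : ∑ k ∈ Finset.range N, |g (k+1) - g k|
        = (∑ k ∈ Finset.Ico 0 p, |g (k+1) - g k| + ∑ k ∈ Finset.Ico p q, |g (k+1) - g k|)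
          + ∑ k ∈ Finset.Ico q N, |g (k+1) - g k| := by
      rw [Finset.sum_Ico_consecutive _ (Nat.zero_le p) h,
        Finset.sum_Ico_consecutive _ (Nat.zero_le q) hq, Finset.range_eq_Ico]
    rw [e]
    have t1 := tel_abs g (Nat.zero_le p)
    have t2 := tel_abs g h
    have t3 := tel_abs g hq
    have a1 := le_abs_self (g p - g 0)
    have a2 := neg_le_abs (g q - g p)
    have a3 := le_abs_self (g N - g q)
    linarith

lemma beta_eq : β = (Real.sqrt 6 + Real.sqrt 2) / 4 := by
  have h : Real.pi / 12 = Real.pi / 3 - Real.pi / 4 := by ring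
  rw [β, h, Real.cos_sub, Real.cos_pi_div_three, Real.cos_pi_div_four, Real.sin_pi_div_three,
    Real.sin_pi_div_four]
  have h6 : Real.sqrt 6 = Real.sqrt 3 * Real.sqrt 2 := by
    rw [← Real.sqrt_mul (by norm_num : (0:ℝ) ≤ 3)]; norm_num
  rw [h6]; ring

lemma beta_pos : 0 < β := by
  rw [beta_eq]
  have h2 : 0 < Real.sqrt 2 := Real.sqrt_pos.mpr (by norm_num)
  linarith [Real.sqrt_nonneg 6]

lemma mem_triangle (z : ℂ) (h1 : 0 ≤ z.im)
    (h2 : Real.sqrt 3 * z.re + z.im ≤ β)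
    (h3 : -(Real.sqrt 3) * z.re + z.im ≤ β) : z ∈ Δβ := by
  have hb : 0 < β := beta_pos
  have hs : 0 < Real.sqrt 3 := Real.sqrt_pos.mpr (by norm_num)
  set s := Real.sqrt 3 with hsdef
  set x := z.re with hx
  set y := z.im with hy
  set wgt : Fin 3 → ℝ := ![(β - y - s*x)/(2*β), (β - y + s*x)/(2*β), y/β] with hwgt
  set pts : Fin 3 → ℂ := ![((-(β / Real.sqrt 3) : ℝ) : ℂ), ((β / Real.sqrt 3 : ℝ) : ℂ),
    (β : ℂ) * Complex.I] with hpts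
  have hw0 : ∀ i ∈ (Finset.univ : Finset (Fin 3)), 0 ≤ wgt i := by
    intro i _
    fin_cases i <;>
      simp only [hwgt, Matrix.cons_val_zero, Matrix.cons_val_one, Matrix.head_cons,
        Matrix.cons_val_two, Matrix.tail_cons] <;>
      (apply div_nonneg <;> linarith)
  have hws1 : ∑ i ∈ (Finset.univ : Finset (Fin 3)), wgt i = 1 := by
    rw [hwgt, Fin.sum_univ_three]
    simp only [Matrix.cons_val_zero, Matrix.cons_val_one, Matrix.head_cons,
      Matrix.cons_val_two, Matrix.tail_cons]
    field_simp
    ring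
  have hws : 0 < ∑ i ∈ (Finset.univ : Finset (Fin 3)), wgt i := by rw [hws1]; norm_num
  have hmem : ∀ i ∈ (Finset.univ : Finset (Fin 3)), pts i ∈
      ({((-(β / Real.sqrt 3) : ℝ) : ℂ), ((β / Real.sqrt 3 : ℝ) : ℂ), (β : ℂ) * Complex.I}
        : Set ℂ) := by
    intro i _
    fin_cases i <;> simp [hpts]
  have hcm := Finset.centerMass_mem_convexHull Finset.univ hw0 hws hmem
  have hz : (Finset.univ : Finset (Fin 3)).centerMass wgt pts = z := by
    rw [Finset.centerMass, hws1, inv_one, one_smul, Fin.sum_univ_three]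
    rw [hwgt, hpts]
    simp only [Matrix.cons_val_zero, Matrix.cons_val_one, Matrix.head_cons,
      Matrix.cons_val_two, Matrix.tail_cons]
    apply Complex.ext
    · simp only [Complex.add_re, Complex.real_smul, Complex.mul_re, Complex.ofReal_re,
        Complex.ofReal_im, Complex.mul_im, Complex.I_re, Complex.I_im]
      field_simp
      ring
    · simp only [Complex.add_im, Complex.real_smul, Complex.mul_re, Complex.ofReal_re,
        Complex.ofReal_im, Complex.mul_im, Complex.I_re, Complex.I_im]
      field_simp
      rw [hy]; ring
  rw [← hz]
  exact hcm

lemma ww_add12 (k : ℕ) : ww^(k+12) = ww^k := by rw [pow_add, ww12, mul_one]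

lemma rot_mul (D : ℂ) (b c : ℕ) :
    (ww^b * D) * (starRingEnd ℂ) (ww^(b+c)) = D * (starRingEnd ℂ) (ww^c) := by
  rw [mul_comm (ww^b) D, mul_assoc, ww_pow_conj]

lemma fit (δ : ℝ → ℂ) (h1 h2 h3 : ℝ) (hsum : h1 + h2 + h3 ≤ β)
    (H1 : ∀ t ∈ Set.Icc (0:ℝ) 1, (δ t * (starRingEnd ℂ) (ww^9)).re ≤ h1)
    (H2 : ∀ t ∈ Set.Icc (0:ℝ) 1, (δ t * (starRingEnd ℂ) (ww^1)).re ≤ h2)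
    (H3 : ∀ t ∈ Set.Icc (0:ℝ) 1, (δ t * (starRingEnd ℂ) (ww^5)).re ≤ h3) :
    ∃ v : ℂ, ∀ t ∈ Set.Icc (0:ℝ) 1, δ t + v ∈ Δβ := by
  have hs : 0 < Real.sqrt 3 := Real.sqrt_pos.mpr (by norm_num)
  have hsne : Real.sqrt 3 ≠ 0 := ne_of_gt hs
  refine ⟨(((h3 - h2)/Real.sqrt 3 : ℝ) : ℂ) + ((β - h2 - h3 : ℝ) : ℂ) * Complex.I, ?_⟩
  intro t ht
  have k1 := H1 t ht
  have k2 := H2 t ht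
  have k3 := H3 t ht
  rw [re9] at k1
  rw [re1] at k2
  rw [re5] at k3
  have hre : (δ t + ((((h3 - h2)/Real.sqrt 3 : ℝ) : ℂ) + ((β - h2 - h3 : ℝ) : ℂ) * Complex.I)).re
      = (δ t).re + (h3 - h2)/Real.sqrt 3 := by simp
  have him : (δ t + ((((h3 - h2)/Real.sqrt 3 : ℝ) : ℂ) + ((β - h2 - h3 : ℝ) : ℂ) * Complex.I)).im
      = (δ t).im + (β - h2 - h3) := by simp
  apply mem_triangle
  · rw [him]; linarith
  · rw [hre, him]
    have expand : Real.sqrt 3 * ((δ t).re + (h3 - h2)/Real.sqrt 3) + ((δ t).im + (β - h2 - h3))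
        = Real.sqrt 3 * (δ t).re + (δ t).im - 2*h2 + β := by field_simp; ring
    rw [expand]; linarith
  · rw [hre, him]
    have expand : -(Real.sqrt 3) * ((δ t).re + (h3 - h2)/Real.sqrt 3) + ((δ t).im + (β - h2 - h3))
        = -(Real.sqrt 3 * (δ t).re) + (δ t).im - 2*h3 + β := by field_simp; ring
    rw [expand]; linarith

set_option maxHeartbeats 1000000 in
/-- Δ_β is a convex G₄-covering of all closed curves of length 2. -/
theorem triangle_beta_G4_covering (γ : ℝ → ℂ) (hγ : IsClosedCurve2 γ) :
    ∃ j : Fin 4, ∃ v : ℂ,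
      (fun t => Complex.I ^ (j : ℕ) * γ t + v) '' Set.Icc 0 1 ⊆ Δβ := by
  classical
  obtain ⟨hcont, hclosed, hvar⟩ := hγ
  -- maximizers in the twelve directions
  have hmax : ∀ m : ℕ, ∃ x, x ∈ Set.Icc (0:ℝ) 1 ∧ ∀ t ∈ Set.Icc (0:ℝ) 1,
      (γ t * (starRingEnd ℂ) (ww^m)).re ≤ (γ x * (starRingEnd ℂ) (ww^m)).re := by
    intro m
    have hc : ContinuousOn (fun t => (γ t * (starRingEnd ℂ) (ww^m)).re) (Set.Icc 0 1) :=
      Complex.continuous_re.comp_continuousOn (hcont.mul continuousOn_const)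
    obtain ⟨x, hx, hm⟩ := isCompact_Icc.exists_isMaxOn (Set.nonempty_Icc.mpr zero_le_one) hc
    exact ⟨x, hx, fun t ht => hm ht⟩
  choose T hT1 hT2 using hmax
  set H : ℕ → ℝ := fun m => (γ (T m) * (starRingEnd ℂ) (ww^m)).re with hH
  -- the partition through all maximizer parameters
  set P : Finset ℝ := insert 0 (insert 1 ((Finset.range 12).image T)) with hP
  have hPmem : ∀ a ∈ P, a ∈ Set.Icc (0:ℝ) 1 := by
    intro a ha
    rw [hP] at ha
    simp only [Finset.mem_insert, Finset.mem_image, Finset.mem_range] at ha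
    rcases ha with rfl | rfl | ⟨m, _, rfl⟩
    · exact ⟨le_refl 0, zero_le_one⟩
    · exact ⟨zero_le_one, le_refl 1⟩
    · exact hT1 m
  have h0P : (0:ℝ) ∈ P := by simp [hP]
  have h1P : (1:ℝ) ∈ P := by simp [hP]
  have hTP : ∀ m, m < 12 → T m ∈ P := by
    intro m hm
    rw [hP]
    simp only [Finset.mem_insert, Finset.mem_image, Finset.mem_range]
    exact Or.inr (Or.inr ⟨m, hm, rfl⟩)
  set n := P.card with hn
  have hnpos : 0 < n := Finset.card_pos.mpr ⟨0, h0P⟩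
  set M := P.orderEmbOfFin hn.symm with hM
  have hMP : ∀ i : Fin n, M i ∈ P := fun i => Finset.orderEmbOfFin_mem P hn.symm i
  set x : ℕ → ℝ := fun k => if h : k < n then M ⟨k, h⟩ else 1 with hxdef
  set N := n - 1 with hN
  have hxmem : ∀ k, x k ∈ Set.Icc (0:ℝ) 1 := by
    intro k
    rw [hxdef]
    dsimp only
    split
    · exact hPmem _ (hMP _)
    · exact ⟨zero_le_one, le_refl 1⟩
  have hxmono : Monotone x := by
    intro a b hab
    rw [hxdef]
    dsimp only
    rcases lt_or_ge a n with ha | ha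
    · rcases lt_or_ge b n with hb | hb
      · rw [dif_pos ha, dif_pos hb]
        exact M.monotone (by exact hab)
      · rw [dif_pos ha, dif_neg (not_lt.mpr hb)]
        exact (hPmem _ (hMP ⟨a, ha⟩)).2
    · rw [dif_neg (not_lt.mpr ha), dif_neg (not_lt.mpr (le_trans ha hab))]
  have hfind : ∀ a ∈ P, ∃ p, p ≤ N ∧ x p = a := by
    intro a ha
    have hra : a ∈ Set.range M := by
      rw [hM, Finset.range_orderEmbOfFin]
      exact_mod_cast ha
    obtain ⟨i, hi⟩ := hra
    refine ⟨i.val, by omega, ?_⟩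
    rw [hxdef]
    dsimp only
    rw [dif_pos i.isLt, Fin.eta]
    exact hi
  have hx0 : x 0 = 0 := by
    obtain ⟨i0, hi0⟩ : (0:ℝ) ∈ Set.range M := by
      rw [hM, Finset.range_orderEmbOfFin]; exact_mod_cast h0P
    rw [hxdef]
    dsimp only
    rw [dif_pos hnpos]
    refine le_antisymm ?_ (hPmem _ (hMP _)).1
    calc M ⟨0, hnpos⟩ ≤ M i0 := M.monotone (by rw [Fin.le_def]; exact Nat.zero_le _)
      _ = 0 := hi0
  have hxN : x N = 1 := by
    obtain ⟨i1, hi1⟩ : (1:ℝ) ∈ Set.range M := by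
      rw [hM, Finset.range_orderEmbOfFin]; exact_mod_cast h1P
    have hNn : N < n := by omega
    rw [hxdef]
    dsimp only
    rw [dif_pos hNn]
    refine le_antisymm (hPmem _ (hMP _)).2 ?_
    calc (1:ℝ) = M i1 := hi1.symm
      _ ≤ M ⟨N, hNn⟩ := M.monotone (by rw [Fin.le_def]; show (i1:ℕ) ≤ N; have h := i1.isLt; omega)
  -- total length of the inscribed polygon is at most 2
  have hlen : ∑ k ∈ Finset.range N, ‖γ (x (k+1)) - γ (x k)‖ ≤ 2 := by
    have h := eVariationOn.sum_le (f := γ) (n := N) hxmono (fun i => hxmem i)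
    rw [hvar] at h
    have heq : ∀ k ∈ Finset.range N, edist (γ (x (k+1))) (γ (x k))
        = ENNReal.ofReal (‖γ (x (k+1)) - γ (x k)‖) := by
      intro k _
      rw [edist_dist, Complex.dist_eq]
    rw [Finset.sum_congr rfl heq,
      ← ENNReal.ofReal_sum_of_nonneg (fun k _ => norm_nonneg _)] at h
    have h2 : (2 : ENNReal) = ENNReal.ofReal 2 := by norm_num
    rw [h2] at h
    exact (ENNReal.ofReal_le_ofReal_iff (by norm_num)).mp h
  -- the key pairing bound
  have pair : ∀ m : ℕ, m < 6 → 2*(H m + H (m+6)) ≤ ∑ k ∈ Finset.range N,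
      |((γ (x (k+1)) - γ (x k)) * (starRingEnd ℂ) (ww^m)).re| := by
    intro m hm
    obtain ⟨p, hpn, hxp⟩ := hfind (T m) (hTP m (by omega))
    obtain ⟨q, hqn, hxq⟩ := hfind (T (m+6)) (hTP (m+6) (by omega))
    have hend : (fun k => (γ (x k) * (starRingEnd ℂ) (ww^m)).re) 0
        = (fun k => (γ (x k) * (starRingEnd ℂ) (ww^m)).re) N := by
      simp only [hx0, hxN, hclosed]
    have key := two_osc_le (fun k => (γ (x k) * (starRingEnd ℂ) (ww^m)).re) N p q hpn hqn hend
    have hgp : (γ (x p) * (starRingEnd ℂ) (ww^m)).re = H m := by rw [hxp]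
    have hgq : (γ (x q) * (starRingEnd ℂ) (ww^m)).re = -(H (m+6)) := by
      rw [hxq, hH]
      dsimp only
      rw [re_shift6 m (γ (T (m+6))), neg_neg]
    rw [hgp, hgq] at key
    have hsummand : ∀ k ∈ Finset.range N,
        |(γ (x (k+1)) * (starRingEnd ℂ) (ww^m)).re - (γ (x k) * (starRingEnd ℂ) (ww^m)).re|
        = |((γ (x (k+1)) - γ (x k)) * (starRingEnd ℂ) (ww^m)).re| := by
      intro k _
      rw [sub_mul, Complex.sub_re]
    rw [Finset.sum_congr rfl hsummand] at key
    calc 2*(H m + H (m+6)) = 2*(H m - -(H (m+6))) := by ring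
      _ ≤ _ := key
  -- summing over the six pairs of directions
  have main : ∑ m ∈ Finset.range 12, H m ≤ 4*β := by
    have e12 : ∑ m ∈ Finset.range 12, H m = ∑ m ∈ Finset.range 6, (H m + H (m+6)) := by
      simp only [Finset.sum_range_succ, Finset.sum_range_zero]
      ring_nf
    have step1 : 2 * ∑ m ∈ Finset.range 6, (H m + H (m+6))
        ≤ ∑ m ∈ Finset.range 6, ∑ k ∈ Finset.range N,
          |((γ (x (k+1)) - γ (x k)) * (starRingEnd ℂ) (ww^m)).re| := by
      rw [Finset.mul_sum]
      exact Finset.sum_le_sum (fun m hm => pair m (Finset.mem_range.mp hm))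
    rw [Finset.sum_comm] at step1
    have step2 : ∑ k ∈ Finset.range N, ∑ m ∈ Finset.range 6,
          |((γ (x (k+1)) - γ (x k)) * (starRingEnd ℂ) (ww^m)).re|
        ≤ ∑ k ∈ Finset.range N, 4 * β * ‖γ (x (k+1)) - γ (x k)‖ :=
      Finset.sum_le_sum (fun k _ => dir_sum _)
    have step3 : ∑ k ∈ Finset.range N, 4 * β * ‖γ (x (k+1)) - γ (x k)‖ ≤ 4*β*2 := by
      rw [← Finset.mul_sum]
      exact mul_le_mul_of_nonneg_left hlen (by linarith [beta_pos])
    linarith [e12, step1, step2, step3]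
  -- one of the four rotations works
  have hsplit : ∑ m ∈ Finset.range 12, H m
      = (H 9 + H 1 + H 5) + (H 6 + H 10 + H 2) + (H 3 + H 7 + H 11) + (H 0 + H 4 + H 8) := by
    simp only [Finset.sum_range_succ, Finset.sum_range_zero]
    ring
  have choice : (H 9 + H 1 + H 5 ≤ β) ∨ (H 6 + H 10 + H 2 ≤ β)
      ∨ (H 3 + H 7 + H 11 ≤ β) ∨ (H 0 + H 4 + H 8 ≤ β) := by
    by_contra hc
    push_neg at hc
    obtain ⟨c1, c2, c3, c4⟩ := hc
    rw [hsplit] at main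
    linarith
  rcases choice with hle | hle | hle | hle
  · -- j = 0
    refine ⟨⟨0, by norm_num⟩, ?_⟩
    obtain ⟨v, hv⟩ := fit (fun t => Complex.I ^ ((0:ℕ)) * γ t) (H 9) (H 1) (H 5) hle
      (fun t ht => by simp only [pow_zero, one_mul]; exact hT2 9 t ht)
      (fun t ht => by simp only [pow_zero, one_mul]; exact hT2 1 t ht)
      (fun t ht => by simp only [pow_zero, one_mul]; exact hT2 5 t ht)
    exact ⟨v, Set.image_subset_iff.mpr (fun t ht => hv t ht)⟩
  · -- j = 1
    refine ⟨⟨1, by norm_num⟩, ?_⟩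
    obtain ⟨v, hv⟩ := fit (fun t => Complex.I ^ ((1:ℕ)) * γ t) (H 6) (H 10) (H 2) hle
      (fun t ht => by
        have h9 : ((Complex.I ^ (1:ℕ) * γ t) * (starRingEnd ℂ) (ww^9)).re
            = (γ t * (starRingEnd ℂ) (ww^6)).re := by
          rw [pow_one, ← ww3, show (9:ℕ) = 3 + 6 by norm_num, rot_mul]
        rw [h9]; exact hT2 6 t ht)
      (fun t ht => by
        have h1 : ((Complex.I ^ (1:ℕ) * γ t) * (starRingEnd ℂ) (ww^1)).re
            = (γ t * (starRingEnd ℂ) (ww^10)).re := by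
          rw [pow_one, ← ww3, show (ww:ℂ)^1 = ww^(3+10) by
            rw [show 3+10 = 1+12 by norm_num, ww_add12], rot_mul]
        rw [h1]; exact hT2 10 t ht)
      (fun t ht => by
        have h5 : ((Complex.I ^ (1:ℕ) * γ t) * (starRingEnd ℂ) (ww^5)).re
            = (γ t * (starRingEnd ℂ) (ww^2)).re := by
          rw [pow_one, ← ww3, show (5:ℕ) = 3 + 2 by norm_num, rot_mul]
        rw [h5]; exact hT2 2 t ht)
    exact ⟨v, Set.image_subset_iff.mpr (fun t ht => hv t ht)⟩
  · -- j = 2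
    refine ⟨⟨2, by norm_num⟩, ?_⟩
    obtain ⟨v, hv⟩ := fit (fun t => Complex.I ^ ((2:ℕ)) * γ t) (H 3) (H 7) (H 11) hle
      (fun t ht => by
        have h9 : ((Complex.I ^ (2:ℕ) * γ t) * (starRingEnd ℂ) (ww^9)).re
            = (γ t * (starRingEnd ℂ) (ww^3)).re := by
          rw [show Complex.I ^ (2:ℕ) = ww^6 by rw [← ww3]; ring,
            show (9:ℕ) = 6 + 3 by norm_num, rot_mul]
        rw [h9]; exact hT2 3 t ht)
      (fun t ht => by
        have h1 : ((Complex.I ^ (2:ℕ) * γ t) * (starRingEnd ℂ) (ww^1)).re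
            = (γ t * (starRingEnd ℂ) (ww^7)).re := by
          rw [show Complex.I ^ (2:ℕ) = ww^6 by rw [← ww3]; ring,
            show (ww:ℂ)^1 = ww^(6+7) by rw [show 6+7 = 1+12 by norm_num, ww_add12], rot_mul]
        rw [h1]; exact hT2 7 t ht)
      (fun t ht => by
        have h5 : ((Complex.I ^ (2:ℕ) * γ t) * (starRingEnd ℂ) (ww^5)).re
            = (γ t * (starRingEnd ℂ) (ww^11)).re := by
          rw [show Complex.I ^ (2:ℕ) = ww^6 by rw [← ww3]; ring,
            show (ww:ℂ)^5 = ww^(6+11) by rw [show 6+11 = 5+12 by norm_num, ww_add12], rot_mul]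
        rw [h5]; exact hT2 11 t ht)
    exact ⟨v, Set.image_subset_iff.mpr (fun t ht => hv t ht)⟩
  · -- j = 3
    refine ⟨⟨3, by norm_num⟩, ?_⟩
    obtain ⟨v, hv⟩ := fit (fun t => Complex.I ^ ((3:ℕ)) * γ t) (H 0) (H 4) (H 8) hle
      (fun t ht => by
        have h9 : ((Complex.I ^ (3:ℕ) * γ t) * (starRingEnd ℂ) (ww^9)).re
            = (γ t * (starRingEnd ℂ) (ww^0)).re := by
          rw [show Complex.I ^ (3:ℕ) = ww^9 by rw [← ww3]; ring,
            show (9:ℕ) = 9 + 0 by norm_num, rot_mul]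
        rw [h9]; exact hT2 0 t ht)
      (fun t ht => by
        have h1 : ((Complex.I ^ (3:ℕ) * γ t) * (starRingEnd ℂ) (ww^1)).re
            = (γ t * (starRingEnd ℂ) (ww^4)).re := by
          rw [show Complex.I ^ (3:ℕ) = ww^9 by rw [← ww3]; ring,
            show (ww:ℂ)^1 = ww^(9+4) by rw [show 9+4 = 1+12 by norm_num, ww_add12], rot_mul]
        rw [h1]; exact hT2 4 t ht)
      (fun t ht => by
        have h5 : ((Complex.I ^ (3:ℕ) * γ t) * (starRingEnd ℂ) (ww^5)).re
            = (γ t * (starRingEnd ℂ) (ww^8)).re := by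
          rw [show Complex.I ^ (3:ℕ) = ww^9 by rw [← ww3]; ring,
            show (ww:ℂ)^5 = ww^(9+8) by rw [show 9+8 = 5+12 by norm_num, ww_add12], rot_mul]
        rw [h5]; exact hT2 8 t ht)
    exact ⟨v, Set.image_subset_iff.mpr (fun t ht => hv t ht)⟩
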